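/- Let Z and X be finite-dimensional real normed vector spaces, K ⊆ Z a convex cone, and E, L ∈ B(Z,X) such that the pair (E,L) is controllable on K and E(K) has nonempty interior in X. Then for any m* ∈ Z*, the following are equivalent: (i) there exists p* ∈ X* such that p*(L(z)) − m*(z) ≤ 0 for all z ∈ K; (ii) for every piecewise continuous z : ℝ → K satisfying d/dt E(z) = L(z) on ℝ and ∫_{−∞}^{∞} ‖z(t)‖_Z dt < ∞, the improper integral ∫_{−∞}^{∞} m*(z(t)) dt (taken as a principal value) is ≥ 0; (iii) m*(z0) ≥ 0 for every z0 ∈ K such that L(z0) = 0. -/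

import Mathlib

open Filter Set

/-- A function `f : ℝ → E` is piecewise continuous on `[a, b]` if it is continuous
there except possibly at finitely many points, at each of which it possesses
one-sided limits. -/
def PiecewiseContinuousOn {E : Type*} [NormedAddCommGroup E]
    (f : ℝ → E) (a b : ℝ) : Prop :=
  ∃ S : Finset ℝ, ContinuousOn f (Set.Icc a b \ S) ∧
    ∀ t ∈ S, (∃ l, Tendsto f (nhdsWithin t (Set.Iio t)) (nhds l)) ∧
      (∃ l, Tendsto f (nhdsWithin t (Set.Ioi t)) (nhds l))

/-- The pair `(E, L)` is controllable on the cone `K`: for all `x0, x1 ∈ E(K)` there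
are `t1 ≥ 0` and a continuous `K`-valued `z` on `[0, t1]` with `d/dt E(z) = L(z)`
(in integral form), `E(z(0)) = x0` and `E(z(t1)) = x1`. -/
def ControllableOn {Z X : Type*} [NormedAddCommGroup Z] [NormedSpace ℝ Z]
    [NormedAddCommGroup X] [NormedSpace ℝ X]
    (E L : Z →L[ℝ] X) (K : Set Z) : Prop :=
  ∀ x0 ∈ E '' K, ∀ x1 ∈ E '' K, ∃ t1 : ℝ, 0 ≤ t1 ∧ ∃ z : ℝ → Z,
    ContinuousOn z (Set.Icc 0 t1) ∧ (∀ t ∈ Set.Icc 0 t1, z t ∈ K) ∧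
    (∀ s ∈ Set.Icc 0 t1, ∀ t ∈ Set.Icc 0 t1,
      E (z t) - E (z s) = ∫ τ in s..t, L (z τ)) ∧
    E (z 0) = x0 ∧ E (z t1) = x1

open MeasureTheory Pointwise intervalIntegral

lemma isCompact_convexHull_fd {Z : Type*} [NormedAddCommGroup Z] [NormedSpace ℝ Z]
    [FiniteDimensional ℝ Z] {s : Set Z} (hs : IsCompact s) :
    IsCompact (convexHull ℝ s) := by
  classical
  rcases s.eq_empty_or_nonempty with rfl | ⟨z₀, hz₀⟩
  · simp
  set n := Module.finrank ℝ Z + 1 with hn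
  set Φ : ((Fin n → ℝ) × (Fin n → Z)) → Z := fun p => ∑ i, p.1 i • p.2 i with hΦ
  have hcont : Continuous Φ := by
    apply continuous_finset_sum
    intro i _
    exact ((continuous_apply i).comp continuous_fst).smul
      ((continuous_apply i).comp continuous_snd)
  have hD : IsCompact ((stdSimplex ℝ (Fin n)) ×ˢ (Set.pi univ fun _ : Fin n => s)) :=
    (isCompact_stdSimplex _ _).prod (isCompact_univ_pi fun _ => hs)
  have himage : convexHull ℝ s = Φ '' ((stdSimplex ℝ (Fin n)) ×ˢ (Set.pi univ fun _ : Fin n => s)) := by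
    apply Subset.antisymm
    · intro x hx
      obtain ⟨ι, hfin, z, w, hrange, hai, hwpos, hwsum, hx⟩ :=
        eq_pos_convex_span_of_mem_convexHull hx
      have hcard : Fintype.card ι ≤ n := by
        have h1 := hai.card_le_finrank_succ
        have h2 : Module.finrank ℝ (vectorSpan ℝ (Set.range z)) ≤ Module.finrank ℝ Z :=
          Submodule.finrank_le _
        omega
      have he : Nonempty (ι ↪ Fin n) := by
        rw [Function.Embedding.nonempty_iff_card_le]
        simpa using hcard
      obtain ⟨e⟩ := he
      set ω : Fin n → ℝ := fun j => ∑ i ∈ Finset.univ.filter (fun i => e i = j), w i with hω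
      set p : Fin n → Z := fun j => if h : ∃ i, e i = j then z h.choose else z₀ with hp
      refine ⟨(ω, p), ⟨⟨fun j => Finset.sum_nonneg fun i _ => (hwpos i).le, ?_⟩, ?_⟩, ?_⟩
      · rw [hω]; rw [Finset.sum_fiberwise Finset.univ (fun i => e i) w]; exact hwsum
      · intro j _
        simp only [hp]
        split
        · next h => exact hrange ⟨h.choose, rfl⟩
        · exact hz₀
      · -- Φ (ω, p) = x
        show (∑ j, ω j • p j) = x
        have : ∀ j, ω j • p j = ∑ i ∈ Finset.univ.filter (fun i => e i = j), w i • p (e i) := by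
          intro j
          rw [hω, Finset.sum_smul]
          apply Finset.sum_congr rfl
          intro i hi
          simp only [Finset.mem_filter] at hi
          rw [hi.2]
        calc (∑ j, ω j • p j) = ∑ j, ∑ i ∈ Finset.univ.filter (fun i => e i = j), w i • p (e i) :=
              Finset.sum_congr rfl fun j _ => this j
          _ = ∑ i, w i • p (e i) := Finset.sum_fiberwise _ _ _
          _ = ∑ i, w i • z i := by
              apply Finset.sum_congr rfl
              intro i _
              congr 1
              have hex : ∃ i', e i' = e i := ⟨i, rfl⟩
              simp only [hp, dif_pos hex]
              have : hex.choose = i := e.injective hex.choose_spec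
              rw [this]
          _ = x := hx
    · rintro x ⟨⟨ω, p⟩, ⟨hω, hpmem⟩, rfl⟩
      rw [mem_convexHull_iff_exists_fintype]
      exact ⟨Fin n, inferInstance, ω, p, hω.1, hω.2, fun i => hpmem i (mem_univ i), rfl⟩
  rw [himage]
  exact hD.image hcont

lemma pcw_integrableOn {E : Type*} [NormedAddCommGroup E] {f : ℝ → E} {a b : ℝ}
    (h : PiecewiseContinuousOn f a b) : IntegrableOn f (Icc a b) := by
  classical
  obtain ⟨S, hcont, hlim⟩ := h
  set T : Set ℝ := Icc a b \ S with hT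
  have hTm : MeasurableSet T := measurableSet_Icc.diff (S.finite_toSet.measurableSet)
  -- local boundedness
  have key : ∀ t : ℝ, ∃ U : Set ℝ, U ∈ nhds t ∧ ∃ C : ℝ, ∀ x ∈ U ∩ T, ‖f x‖ ≤ C := by
    intro t
    by_cases hts : t ∈ Icc a b
    · by_cases htS : t ∈ S
      · obtain ⟨⟨l₁, h₁⟩, ⟨l₂, h₂⟩⟩ := hlim t htS
        have e₁ : ∀ᶠ x in nhds t, x ∈ Iio t → ‖f x‖ ≤ ‖l₁‖ + 1 := by
          rw [← eventually_nhdsWithin_iff]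
          filter_upwards [h₁.eventually (Metric.ball_mem_nhds l₁ one_pos)] with x hx
          have h1 := le_of_lt (mem_ball_iff_norm.mp hx)
          have h2 := norm_sub_norm_le (f x) l₁
          linarith
        have e₂ : ∀ᶠ x in nhds t, x ∈ Ioi t → ‖f x‖ ≤ ‖l₂‖ + 1 := by
          rw [← eventually_nhdsWithin_iff]
          filter_upwards [h₂.eventually (Metric.ball_mem_nhds l₂ one_pos)] with x hx
          have h1 := le_of_lt (mem_ball_iff_norm.mp hx)
          have h2 := norm_sub_norm_le (f x) l₂
          linarith
        refine ⟨_, (e₁.and e₂), max (‖l₁‖ + 1) (‖l₂‖ + 1), ?_⟩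
        rintro x ⟨⟨hx₁, hx₂⟩, hxT⟩
        have hxt : x ≠ t := fun hh => hxT.2 (hh ▸ htS)
        rcases lt_or_gt_of_ne hxt with hlt | hgt
        · exact le_max_of_le_left (hx₁ hlt)
        · exact le_max_of_le_right (hx₂ hgt)
      · have hc := hcont t ⟨hts, htS⟩
        have e : ∀ᶠ x in nhds t, x ∈ T → ‖f x‖ ≤ ‖f t‖ + 1 := by
          rw [← eventually_nhdsWithin_iff]
          filter_upwards [hc.eventually (Metric.ball_mem_nhds (f t) one_pos)] with x hx
          have h1 := le_of_lt (mem_ball_iff_norm.mp hx)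
          have h2 := norm_sub_norm_le (f x) (f t)
          linarith
        exact ⟨_, e, ‖f t‖ + 1, fun x ⟨hx, hxT⟩ => hx hxT⟩
    · refine ⟨(Icc a b)ᶜ, (isClosed_Icc.isOpen_compl).mem_nhds hts, 0, ?_⟩
      rintro x ⟨hx, hxT⟩
      exact absurd hxT.1 hx
  choose U hU C hC using key
  obtain ⟨F, -, hFcover⟩ := isCompact_Icc.elim_nhds_subcover U (fun x _ => hU x)
  have hbd : ∀ x ∈ T, ‖f x‖ ≤ ∑ j ∈ F, |C j| := by
    intro x hx
    obtain ⟨j, hjF, hjx⟩ := Set.mem_iUnion₂.mp (hFcover hx.1)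
    calc ‖f x‖ ≤ C j := hC j x ⟨hjx, hx⟩
      _ ≤ |C j| := le_abs_self _
      _ ≤ ∑ j ∈ F, |C j| := Finset.single_le_sum (fun i _ => abs_nonneg (C i)) hjF
  -- integrability
  haveI : IsFiniteMeasure (volume.restrict T) :=
    ⟨by rw [Measure.restrict_apply_univ]
        exact lt_of_le_of_lt (measure_mono diff_subset) measure_Icc_lt_top⟩
  have hint : IntegrableOn f T := by
    refine Integrable.mono' (integrable_const (∑ j ∈ F, |C j|))
      (hcont.aestronglyMeasurable hTm) ?_
    exact (ae_restrict_iff' hTm).2 (ae_of_all _ hbd)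
  have hSe : Icc a b =ᵐ[volume] T := by
    have hS0 : volume (↑S : Set ℝ) = 0 := (S.countable_toSet).measure_zero _
    have hh : (Icc a b \ (↑S : Set ℝ)) =ᵐ[volume] Icc a b :=
      diff_ae_eq_self.mpr (measure_mono_null inter_subset_right hS0)
    exact hh.symm
  rwa [IntegrableOn, Measure.restrict_congr_set hSe]

lemma pcw_intervalIntegrable {E : Type*} [NormedAddCommGroup E] {f : ℝ → E}
    (h : ∀ a b : ℝ, PiecewiseContinuousOn f a b) (a b : ℝ) :
    IntervalIntegrable f volume a b := by
  rw [intervalIntegrable_iff]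
  exact (pcw_integrableOn (h (min a b) (max a b))).mono_set Set.Ioc_subset_Icc_self

lemma ae_ne_real (c : ℝ) : ∀ᵐ x : ℝ ∂(MeasureTheory.volume), x ≠ c := by
  refine MeasureTheory.ae_iff.mpr ?_
  simp only [ne_eq, not_not, Set.setOf_eq_eq_singleton]
  exact MeasureTheory.measure_singleton c

lemma tendsto_shift_left {Z : Type*} [NormedAddCommGroup Z] {f : ℝ → Z} {a b : ℝ}
    (hf : ContinuousOn f (Icc a b)) {d p : ℝ} (h1 : a < p + d) (h2 : p + d ≤ b) :
    Tendsto (fun x => f (x + d)) (nhdsWithin p (Iio p)) (nhds (f (p + d))) := by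
  have hc : Tendsto f (nhdsWithin (p + d) (Icc a b)) (nhds (f (p + d))) :=
    hf (p + d) ⟨h1.le, h2⟩
  apply hc.comp
  apply tendsto_nhdsWithin_of_tendsto_nhds_of_eventually_within
  · exact ((continuous_add_right d).tendsto p).mono_left nhdsWithin_le_nhds
  · filter_upwards [Ioo_mem_nhdsLT_of_mem (⟨by linarith, le_rfl⟩ : p ∈ Ioc (a - d) p)] with x hx
    exact ⟨by linarith [hx.1], by linarith [hx.2]⟩

lemma tendsto_shift_right {Z : Type*} [NormedAddCommGroup Z] {f : ℝ → Z} {a b : ℝ}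
    (hf : ContinuousOn f (Icc a b)) {d p : ℝ} (h1 : a ≤ p + d) (h2 : p + d < b) :
    Tendsto (fun x => f (x + d)) (nhdsWithin p (Ioi p)) (nhds (f (p + d))) := by
  have hc : Tendsto f (nhdsWithin (p + d) (Icc a b)) (nhds (f (p + d))) :=
    hf (p + d) ⟨h1, h2.le⟩
  apply hc.comp
  apply tendsto_nhdsWithin_of_tendsto_nhds_of_eventually_within
  · exact ((continuous_add_right d).tendsto p).mono_left nhdsWithin_le_nhds
  · filter_upwards [Ioo_mem_nhdsGT_of_mem (⟨le_rfl, by linarith⟩ : p ∈ Ico p (b - d))] with x hx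
    exact ⟨by linarith [hx.1], by linarith [hx.2]⟩

section
variable {Z X : Type*} [NormedAddCommGroup Z] [NormedSpace ℝ Z] [FiniteDimensional ℝ Z]
    [NormedAddCommGroup X] [NormedSpace ℝ X] [FiniteDimensional ℝ X]
    {K : Set Z} {E L : Z →L[ℝ] X} {mstar : Z →L[ℝ] ℝ}

set_option linter.unusedSectionVars false

lemma traj_avg (hKcone : ∀ z ∈ K, ∀ α : ℝ, 0 ≤ α → α • z ∈ K) (hKconv : Convex ℝ K)
    (hctrl : ControllableOn E L K) {x0 x1 : X} (hx0 : x0 ∈ E '' K) (hx1 : x1 ∈ E '' K) :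
    ∃ ζ ∈ K, L ζ = x1 - x0 := by
  obtain ⟨t1, ht1, z, hzc, hzK, hzeq, hz0, hz1⟩ := hctrl x0 hx0 x1 hx1
  rcases eq_or_lt_of_le ht1 with h0 | h0
  · refine ⟨0, ?_, ?_⟩
    · have hK0 : (0:Z) ∈ K := by
        obtain ⟨w, hw, -⟩ := hx0
        simpa using hKcone w hw 0 le_rfl
      exact hK0
    · rw [map_zero, ← hz1, ← hz0, ← h0, sub_self]
  · have hzi : IntervalIntegrable z volume 0 t1 := by
      apply ContinuousOn.intervalIntegrable
      rwa [uIcc_of_le ht1]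
    refine ⟨∫ τ in (0:ℝ)..t1, z τ, ?_, ?_⟩
    · -- membership in K
      set s : Set Z := convexHull ℝ (z '' Icc 0 t1) with hs
      have hsc : IsClosed s := (isCompact_convexHull_fd
        (isCompact_Icc.image_of_continuousOn hzc)).isClosed
      have havg : (⨍ τ in Ioc 0 t1, z τ) ∈ s := by
        apply Convex.set_average_mem (convex_convexHull ℝ _) hsc
        · simp [Real.volume_Ioc, h0]
        · exact (measure_Ioc_lt_top).ne
        · refine (ae_restrict_iff' measurableSet_Ioc).2 (ae_of_all _ fun τ hτ => ?_)
          exact subset_convexHull ℝ _ ⟨τ, Ioc_subset_Icc_self hτ, rfl⟩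
        · rw [← intervalIntegrable_iff_integrableOn_Ioc_of_le ht1]
          exact hzi
      have hsub : s ⊆ K := convexHull_min (by rintro w ⟨τ, hτ, rfl⟩; exact hzK τ hτ) hKconv
      have heq : (∫ τ in (0:ℝ)..t1, z τ) = t1 • (⨍ τ in Ioc 0 t1, z τ) := by
        rw [setAverage_eq, intervalIntegral.integral_of_le ht1, measureReal_def, Real.volume_Ioc, smul_smul]
        rw [sub_zero, ENNReal.toReal_ofReal ht1, mul_inv_cancel₀ (ne_of_gt h0), one_smul]
      rw [heq]
      exact hKcone _ (hsub havg) t1 ht1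
    · rw [← L.intervalIntegral_comp_comm hzi, ← hzeq 0 ⟨le_rfl, ht1⟩ t1 ⟨ht1, le_rfl⟩, hz0, hz1]

lemma kernel_imp_conic (hKcone : ∀ z ∈ K, ∀ α : ℝ, 0 ≤ α → α • z ∈ K) (hKconv : Convex ℝ K)
    (hctrl : ControllableOn E L K) (hint : (interior (E '' K)).Nonempty)
    (h3 : ∀ z0 ∈ K, L z0 = 0 → 0 ≤ mstar z0) :
    ∃ pstar : X →L[ℝ] ℝ, ∀ z ∈ K, pstar (L z) - mstar z ≤ 0 := by
  classical
  have hK0 : (0:Z) ∈ K := by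
    obtain ⟨xb, hxb⟩ := hint
    obtain ⟨w, hw, -⟩ := interior_subset hxb
    simpa using hKcone w hw 0 le_rfl
  have hKadd : ∀ u ∈ K, ∀ v ∈ K, u + v ∈ K := by
    intro u hu v hv
    have h2 : (1/2 : ℝ) • u + (1/2 : ℝ) • v ∈ K :=
      hKconv hu hv (by norm_num) (by norm_num) (by norm_num)
    have := hKcone _ h2 2 (by norm_num)
    rwa [smul_add, smul_smul, smul_smul, show (2:ℝ) * (1/2) = 1 by norm_num, one_smul,
      one_smul] at this
  -- surjectivity of L on K
  have hsurj : ∀ v : X, ∃ ζ ∈ K, L ζ = v := by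
    intro v
    obtain ⟨xb, hxb⟩ := hint
    obtain ⟨r, hr, hball⟩ := Metric.mem_nhds_iff.mp (mem_interior_iff_mem_nhds.mp hxb)
    rcases eq_or_ne v 0 with rfl | hv
    · exact ⟨0, hK0, map_zero L⟩
    · set c : ℝ := r / (2 * ‖v‖) with hc
      have hv' : (0:ℝ) < ‖v‖ := norm_pos_iff.mpr hv
      have hc0 : 0 < c := div_pos hr (by positivity)
      have hnorm : ‖c • v‖ = r / 2 := by
        rw [norm_smul, Real.norm_eq_abs, abs_of_pos hc0, hc]
        field_simp
      have hmem : xb + c • v ∈ E '' K := by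
        apply hball
        simp only [Metric.mem_ball, dist_self_add_left, hnorm]
        linarith
      obtain ⟨ζ', hζ'K, hζ'⟩ := traj_avg hKcone hKconv hctrl (interior_subset hxb) hmem
      refine ⟨c⁻¹ • ζ', hKcone _ hζ'K _ (inv_nonneg.mpr hc0.le), ?_⟩
      rw [_root_.map_smul, hζ', add_sub_cancel_left, smul_smul,
        inv_mul_cancel₀ (ne_of_gt hc0), one_smul]
  -- the sublinear functional
  set Sv : X → Set ℝ := fun v => mstar '' {ζ | ζ ∈ K ∧ L ζ = v} with hSv
  have hne : ∀ v, (Sv v).Nonempty := by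
    intro v
    obtain ⟨ζ, hζK, hζ⟩ := hsurj v
    exact ⟨mstar ζ, ⟨ζ, ⟨hζK, hζ⟩, rfl⟩⟩
  have hpair : ∀ v, ∀ r ∈ Sv v, ∀ r' ∈ Sv (-v), (0:ℝ) ≤ r + r' := by
    rintro v r ⟨ζ, ⟨hζK, hζL⟩, rfl⟩ r' ⟨ζ', ⟨hζ'K, hζ'L⟩, rfl⟩
    have hmem := hKadd ζ hζK ζ' hζ'K
    have : L (ζ + ζ') = 0 := by rw [map_add, hζL, hζ'L, add_neg_cancel]
    have := h3 _ hmem this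
    rwa [map_add] at this
  have hbdd : ∀ v, BddBelow (Sv v) := by
    intro v
    obtain ⟨r', hr'⟩ := hne (-v)
    exact ⟨-r', fun r hr => by linarith [hpair v r hr r' hr']⟩
  set N : X → ℝ := fun v => sInf (Sv v) with hN
  have hNle : ∀ ζ ∈ K, N (L ζ) ≤ mstar ζ := fun ζ hζ =>
    csInf_le (hbdd _) ⟨ζ, ⟨hζ, rfl⟩, rfl⟩
  have hN0 : 0 ≤ N 0 := by
    apply le_csInf (hne 0)
    rintro r ⟨ζ, ⟨hζK, hζL⟩, rfl⟩
    exact h3 ζ hζK hζL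
  have hNadd : ∀ u v, N (u + v) ≤ N u + N v := by
    intro u v
    have h1 : ∀ rv ∈ Sv v, N (u + v) ≤ N u + rv := by
      rintro rv ⟨ζv, ⟨hζvK, hζvL⟩, rfl⟩
      have h2 : N (u + v) - mstar ζv ≤ N u := by
        apply le_csInf (hne u)
        rintro ru ⟨ζu, ⟨hζuK, hζuL⟩, rfl⟩
        have hmem : ζu + ζv ∈ K := hKadd _ hζuK _ hζvK
        have hL : L (ζu + ζv) = u + v := by rw [map_add, hζuL, hζvL]
        have := csInf_le (hbdd (u+v)) ⟨ζu + ζv, ⟨hmem, hL⟩, rfl⟩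
        rw [map_add] at this
        linarith
      linarith
    have h2 : ∀ rv ∈ Sv v, N (u + v) - N u ≤ rv := fun rv hrv => by linarith [h1 rv hrv]
    have := le_csInf (hne v) h2
    linarith
  have hNhom : ∀ c : ℝ, 0 < c → ∀ v, N (c • v) = c * N v := by
    intro c hc v
    have bs : Sv (c • v) = c • Sv v := by
      ext r
      constructor
      · rintro ⟨ζ, ⟨hζK, hζL⟩, rfl⟩
        refine ⟨mstar (c⁻¹ • ζ), ⟨c⁻¹ • ζ, ⟨hKcone _ hζK _ (inv_nonneg.mpr hc.le), ?_⟩, rfl⟩, ?_⟩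
        · rw [_root_.map_smul, hζL, smul_smul, inv_mul_cancel₀ (ne_of_gt hc), one_smul]
        · show c • mstar (c⁻¹ • ζ) = mstar ζ
          rw [_root_.map_smul, smul_smul, mul_inv_cancel₀ (ne_of_gt hc), one_smul]
      · rintro ⟨r', ⟨ζ, ⟨hζK, hζL⟩, rfl⟩, rfl⟩
        refine ⟨c • ζ, ⟨hKcone _ hζK _ hc.le, by rw [_root_.map_smul, hζL]⟩, by
          show mstar (c • ζ) = c • mstar ζ
          rw [_root_.map_smul]⟩
    show sInf (Sv (c • v)) = c * sInf (Sv v)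
    rw [bs, Real.sInf_smul_of_nonneg hc.le, smul_eq_mul]
  -- Hahn-Banach
  set f : X →ₗ.[ℝ] ℝ := ⟨⊥, 0⟩ with hf
  obtain ⟨φ, -, hφ⟩ := exists_extension_of_le_sublinear f N hNhom hNadd (by
    rintro ⟨x, hx⟩
    have : x = 0 := (Submodule.mem_bot ℝ).mp hx
    subst this
    exact hN0)
  refine ⟨LinearMap.toContinuousLinearMap φ, fun z hz => ?_⟩
  have : φ (L z) ≤ N (L z) := hφ (L z)
  have h2 := hNle z hz
  simp only [LinearMap.coe_toContinuousLinearMap']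
  linarith

lemma conic_imp_integral
    (hpz : ∃ pstar : X →L[ℝ] ℝ, ∀ z ∈ K, pstar (L z) - mstar z ≤ 0)
    (z : ℝ → Z) (hzK : ∀ t, z t ∈ K)
    (hpcw : ∀ a b : ℝ, PiecewiseContinuousOn z a b)
    (heq : ∀ s t : ℝ, E (z t) - E (z s) = ∫ τ in s..t, L (z τ))
    (hnorm : ∃ c : ℝ, Tendsto (fun T : ℝ => ∫ t in (-T)..T, ‖z t‖) atTop (nhds c)) :
    ∃ c : ℝ, Tendsto (fun T : ℝ => ∫ t in (-T)..T, mstar (z t)) atTop (nhds c) ∧ 0 ≤ c := by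
  obtain ⟨p, hp⟩ := hpz
  obtain ⟨c₀, hc₀⟩ := hnorm
  have hii : ∀ a b : ℝ, IntervalIntegrable z volume a b := pcw_intervalIntegrable hpcw
  have hIoc : ∀ T : ℝ, IntegrableOn z (Ioc (-T) T) volume := by
    intro T
    rcases le_total (-T) T with h | h
    · have := hii (-T) T
      rwa [intervalIntegrable_iff, uIoc_of_le h] at this
    · rw [Ioc_eq_empty (not_lt.mpr h)]
      exact integrableOn_empty
  have hzint : Integrable z := integrable_of_intervalIntegral_norm_tendsto c₀ hIoc
    tendsto_neg_atTop_atBot tendsto_id hc₀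
  have hm : Integrable (fun t => mstar (z t)) := mstar.integrable_comp hzint
  have hgl : Integrable (fun t => p (L (z t))) := (p.comp L).integrable_comp hzint
  have hLz : Integrable (fun t => L (z t)) := L.integrable_comp hzint
  set I : ℝ := ∫ t, p (L (z t)) with hI
  set c : ℝ := ∫ t, mstar (z t) with hc
  have hctend : Tendsto (fun T : ℝ => ∫ t in (-T)..T, mstar (z t)) atTop (nhds c) :=
    intervalIntegral_tendsto_integral hm tendsto_neg_atTop_atBot tendsto_id
  refine ⟨c, hctend, ?_⟩
  have h1 : I ≤ c := by
    apply integral_mono hgl hm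
    intro t
    have := hp (z t) (hzK t)
    dsimp
    linarith
  -- find good times
  have hEsmall : ∀ n : ℕ, ∃ T : ℝ, (n : ℝ) ≤ T ∧ ‖z T‖ + ‖z (-T)‖ < 1/(n+1) := by
    intro n
    by_contra hcon
    push_neg at hcon
    have hwint : Integrable (fun t : ℝ => ‖z t‖ + ‖z (-t)‖) := by
      apply Integrable.add hzint.norm
      exact hzint.comp_neg.norm
    have hsub : Ici (n:ℝ) ⊆ {t : ℝ | 1/(n+1) ≤ ‖z t‖ + ‖z (-t)‖} := fun T hT => hcon T hT
    have hlt := hwint.measure_ge_lt_top (by positivity : (0:ℝ) < 1/(n+1))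
    have : (volume (Ici (n:ℝ))) ≤ volume {t : ℝ | 1/(n+1) ≤ ‖z t‖ + ‖z (-t)‖} :=
      measure_mono hsub
    rw [Real.volume_Ici] at this
    exact absurd (lt_of_le_of_lt this hlt) (by simp)
  choose T hTge hTsmall using hEsmall
  have hTtend : Tendsto T atTop atTop :=
    tendsto_atTop_mono hTge tendsto_natCast_atTop_atTop
  have hIlim : Tendsto (fun T : ℝ => ∫ t in (-T)..T, p (L (z t))) atTop (nhds I) :=
    intervalIntegral_tendsto_integral hgl tendsto_neg_atTop_atBot tendsto_id
  have hcompI : Tendsto (fun n : ℕ => ∫ t in (-(T n))..(T n), p (L (z t))) atTop (nhds I) :=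
    hIlim.comp hTtend
  have hform : ∀ n : ℕ, (∫ t in (-(T n))..(T n), p (L (z t)))
      = p (E (z (T n))) - p (E (z (-(T n)))) := by
    intro n
    have h2 : (∫ t in (-(T n))..(T n), p (L (z t)))
        = p (∫ t in (-(T n))..(T n), L (z t)) := by
      exact p.intervalIntegral_comp_comm hLz.intervalIntegrable
    rw [h2, ← heq (-(T n)) (T n), map_sub]
  have hD0 : Tendsto (fun n : ℕ => p (E (z (T n))) - p (E (z (-(T n))))) atTop (nhds 0) := by
    have hb : ∀ n : ℕ, ‖p (E (z (T n))) - p (E (z (-(T n))))‖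
        ≤ (‖p‖ * ‖E‖) * (1/(n+1)) := by
      intro n
      have h3 : ‖p (E (z (T n))) - p (E (z (-(T n))))‖
          ≤ ‖p‖ * ‖E‖ * ‖z (T n)‖ + ‖p‖ * ‖E‖ * ‖z (-(T n))‖ := by
        calc ‖p (E (z (T n))) - p (E (z (-(T n))))‖
            ≤ ‖p (E (z (T n)))‖ + ‖p (E (z (-(T n))))‖ := norm_sub_le _ _
          _ ≤ ‖p‖ * ‖E‖ * ‖z (T n)‖ + ‖p‖ * ‖E‖ * ‖z (-(T n))‖ := by
              have b1 : ‖p (E (z (T n)))‖ ≤ ‖p‖ * ‖E‖ * ‖z (T n)‖ :=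
                (p.le_opNorm _).trans (by rw [mul_assoc]; gcongr; exact E.le_opNorm _)
              have b2 : ‖p (E (z (-(T n))))‖ ≤ ‖p‖ * ‖E‖ * ‖z (-(T n))‖ :=
                (p.le_opNorm _).trans (by rw [mul_assoc]; gcongr; exact E.le_opNorm _)
              linarith
      have h4 := (hTsmall n).le
      have h5 : (0:ℝ) ≤ ‖p‖ * ‖E‖ := by positivity
      nlinarith [norm_nonneg (z (T n)), norm_nonneg (z (-(T n)))]
    have hlim : Tendsto (fun n : ℕ => (‖p‖ * ‖E‖) * (1/(n+1))) atTop (nhds 0) := by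
      have := tendsto_one_div_add_atTop_nhds_zero_nat (𝕜 := ℝ)
      simpa using this.const_mul (‖p‖ * ‖E‖)
    exact squeeze_zero_norm hb hlim
  have hI0 : I = 0 := by
    have := hcompI
    rw [funext hform] at this
    exact tendsto_nhds_unique this hD0
  linarith

set_option maxHeartbeats 1000000 in
lemma integral_imp_kernel
    (hKcone : ∀ z ∈ K, ∀ α : ℝ, 0 ≤ α → α • z ∈ K)
    (hctrl : ControllableOn E L K)
    (h2 : ∀ z : ℝ → Z, (∀ t, z t ∈ K) →
        (∀ a b : ℝ, PiecewiseContinuousOn z a b) →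
        (∀ s t : ℝ, E (z t) - E (z s) = ∫ τ in s..t, L (z τ)) →
        (∃ c : ℝ, Tendsto (fun T : ℝ => ∫ t in (-T)..T, ‖z t‖) atTop (nhds c)) →
        ∃ c : ℝ, Tendsto (fun T : ℝ => ∫ t in (-T)..T, mstar (z t)) atTop (nhds c) ∧
          0 ≤ c) :
    ∀ z0 ∈ K, L z0 = 0 → 0 ≤ mstar z0 := by
  classical
  intro z0 hz0K hz0L
  have hK0 : (0:Z) ∈ K := by simpa using hKcone z0 hz0K 0 le_rfl
  have hE0 : (0:X) ∈ E '' K := ⟨0, hK0, map_zero E⟩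
  have hEz0 : E z0 ∈ E '' K := ⟨z0, hz0K, rfl⟩
  obtain ⟨t1, ht1, z1, hz1c, hz1K, hz1eq, hz10, hz1t1⟩ := hctrl 0 hE0 (E z0) hEz0
  obtain ⟨t2, ht2, z2, hz2c, hz2K, hz2eq, hz20, hz2t2⟩ := hctrl (E z0) hEz0 0 hE0
  set A : ℝ := ∫ y in (0:ℝ)..t1, mstar (z1 y) with hA
  set B : ℝ := ∫ y in (0:ℝ)..t2, mstar (z2 y) with hB
  have key : ∀ τ : ℝ, 0 < τ → 0 ≤ A + τ * mstar z0 + B := by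
    intro τ hτ
    set w : ℝ → Z := fun t =>
      if t < -t1 then 0 else if t < 0 then z1 (t + t1)
      else if t < τ then z0 else if t ≤ τ + t2 then z2 (t - τ) else 0 with hw
    -- basic evaluations
    have hw1 : ∀ x : ℝ, x < -t1 → w x = 0 := by
      intro x hx; simp only [hw]; rw [if_pos hx]
    have hw2 : ∀ x : ℝ, -t1 ≤ x → x < 0 → w x = z1 (x + t1) := by
      intro x hx1 hx2; simp only [hw]; rw [if_neg (not_lt.mpr hx1), if_pos hx2]
    have hw3 : ∀ x : ℝ, 0 ≤ x → x < τ → w x = z0 := by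
      intro x hx1 hx2; simp only [hw]
      rw [if_neg (by push_neg; linarith), if_neg (not_lt.mpr hx1), if_pos hx2]
    have hw4 : ∀ x : ℝ, τ ≤ x → x ≤ τ + t2 → w x = z2 (x - τ) := by
      intro x hx1 hx2; simp only [hw]
      rw [if_neg (by push_neg; linarith), if_neg (by push_neg; linarith),
        if_neg (not_lt.mpr hx1), if_pos hx2]
    have hw5 : ∀ x : ℝ, τ + t2 < x → w x = 0 := by
      intro x hx; simp only [hw]
      rw [if_neg (by push_neg; linarith), if_neg (by push_neg; linarith),
        if_neg (by push_neg; linarith), if_neg (not_le.mpr hx)]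
    -- E-values on closed pieces
    have hEz0t1 : t1 = 0 → E z0 = 0 := by
      intro h; rw [← hz1t1, h, hz10]
    have hEA : ∀ x : ℝ, x ≤ -t1 → E (w x) = 0 := by
      intro x hx
      rcases lt_or_eq_of_le hx with h | h
      · rw [hw1 x h, map_zero]
      · subst h
        rcases lt_or_eq_of_le ht1 with h1 | h1
        · rw [hw2 (-t1) le_rfl (by linarith), neg_add_cancel, hz10]
        · have h0' : -t1 = (0:ℝ) := by rw [← h1, neg_zero]
          rw [h0', hw3 0 le_rfl hτ]
          exact hEz0t1 h1.symm
    have hEB : ∀ x : ℝ, -t1 ≤ x → x ≤ 0 → E (w x) = E (z1 (x + t1)) := by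
      intro x hx1 hx2
      rcases lt_or_eq_of_le hx2 with h | h
      · rw [hw2 x hx1 h]
      · subst h
        rw [hw3 0 le_rfl hτ, zero_add, hz1t1]
    have hEC : ∀ x : ℝ, 0 ≤ x → x ≤ τ → E (w x) = E z0 := by
      intro x hx1 hx2
      rcases lt_or_eq_of_le hx2 with h | h
      · rw [hw3 x hx1 h]
      · subst h
        rw [hw4 x le_rfl (by linarith), sub_self, hz20]
    have hED : ∀ x : ℝ, τ ≤ x → x ≤ τ + t2 → E (w x) = E (z2 (x - τ)) := by
      intro x hx1 hx2; rw [hw4 x hx1 hx2]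
    have hEE : ∀ x : ℝ, τ + t2 ≤ x → E (w x) = 0 := by
      intro x hx
      rcases lt_or_eq_of_le hx with h | h
      · rw [hw5 x h, map_zero]
      · subst h
        rw [hw4 (τ + t2) (by linarith) le_rfl, add_sub_cancel_left, hz2t2]
    -- K-membership
    have hwK : ∀ t : ℝ, w t ∈ K := by
      intro t
      simp only [hw]
      split_ifs with h1 h2' h3 h4
      · exact hK0
      · exact hz1K _ ⟨by linarith, by linarith⟩
      · exact hz0K
      · exact hz2K _ ⟨by linarith, by linarith⟩
      · exact hK0
    -- continuity off the four breakpoints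
    have hwcont : ∀ t : ℝ, t ≠ -t1 → t ≠ 0 → t ≠ τ → t ≠ τ + t2 → ContinuousAt w t := by
      intro t h1 h2' h3 h4
      rcases lt_trichotomy t (-t1) with hlt | heq | hgt
      · apply continuousAt_const.congr
        filter_upwards [Iio_mem_nhds hlt] with x hx
        exact (hw1 x hx).symm
      · exact absurd heq h1
      rcases lt_trichotomy t 0 with hlt0 | heq0 | hgt0
      · have hmodel : ContinuousAt (fun x => z1 (x + t1)) t := by
          apply ContinuousAt.comp (hz1c.continuousAt (Icc_mem_nhds (by linarith) (by linarith)))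
          exact (continuous_add_right t1).continuousAt
        apply hmodel.congr
        filter_upwards [Ioo_mem_nhds hgt hlt0] with x hx
        exact (hw2 x hx.1.le hx.2).symm
      · exact absurd heq0 h2'
      rcases lt_trichotomy t τ with hltτ | heqτ | hgtτ
      · apply continuousAt_const.congr
        filter_upwards [Ioo_mem_nhds hgt0 hltτ] with x hx
        exact (hw3 x hx.1.le hx.2).symm
      · exact absurd heqτ h3
      rcases lt_trichotomy t (τ + t2) with hltτ2 | heqτ2 | hgtτ2
      · have hmodel : ContinuousAt (fun x => z2 (x - τ)) t := by
          apply ContinuousAt.comp (hz2c.continuousAt (Icc_mem_nhds (by linarith) (by linarith)))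
          exact (continuous_sub_right τ).continuousAt
        apply hmodel.congr
        filter_upwards [Ioo_mem_nhds hgtτ hltτ2] with x hx
        exact (hw4 x hx.1.le hx.2.le).symm
      · exact absurd heqτ2 h4
      · apply continuousAt_const.congr
        filter_upwards [Ioi_mem_nhds hgtτ2] with x hx
        exact (hw5 x hx).symm
    -- one-sided limits everywhere
    have hlimL : ∀ t : ℝ, ∃ l, Tendsto w (nhdsWithin t (Iio t)) (nhds l) := by
      intro t
      rcases le_or_gt t (-t1) with h | h
      · refine ⟨0, tendsto_const_nhds.congr' ?_⟩
        filter_upwards [eventually_mem_nhdsWithin] with x (hx : x ∈ Iio t)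
        exact (hw1 x (by exact lt_of_lt_of_le hx h)).symm
      rcases le_or_gt t 0 with h0 | h0
      · refine ⟨z1 (t + t1), (tendsto_shift_left hz1c (by linarith) (by linarith)).congr' ?_⟩
        filter_upwards [Ioo_mem_nhdsLT_of_mem (⟨h, le_rfl⟩ : t ∈ Ioc (-t1) t)] with x hx
        exact (hw2 x hx.1.le (lt_of_lt_of_le hx.2 h0)).symm
      rcases le_or_gt t τ with hτ' | hτ'
      · refine ⟨z0, tendsto_const_nhds.congr' ?_⟩
        filter_upwards [Ioo_mem_nhdsLT_of_mem (⟨h0, le_rfl⟩ : t ∈ Ioc 0 t)] with x hx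
        exact (hw3 x hx.1.le (lt_of_lt_of_le hx.2 hτ')).symm
      rcases le_or_gt t (τ + t2) with hτ2 | hτ2
      · refine ⟨z2 (t + -τ), (tendsto_shift_left hz2c (by linarith) (by linarith)).congr' ?_⟩
        filter_upwards [Ioo_mem_nhdsLT_of_mem (⟨hτ', le_rfl⟩ : t ∈ Ioc τ t)] with x hx
        rw [hw4 x hx.1.le (le_trans hx.2.le hτ2), sub_eq_add_neg]
      · refine ⟨0, tendsto_const_nhds.congr' ?_⟩
        filter_upwards [Ioo_mem_nhdsLT_of_mem (⟨hτ2, le_rfl⟩ : t ∈ Ioc (τ + t2) t)] with x hx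
        exact (hw5 x hx.1).symm
    have hlimR : ∀ t : ℝ, ∃ l, Tendsto w (nhdsWithin t (Ioi t)) (nhds l) := by
      intro t
      rcases lt_or_ge t (-t1) with h | h
      · refine ⟨0, tendsto_const_nhds.congr' ?_⟩
        filter_upwards [Ioo_mem_nhdsGT_of_mem (⟨le_rfl, h⟩ : t ∈ Ico t (-t1))] with x hx
        exact (hw1 x hx.2).symm
      rcases lt_or_ge t 0 with h0 | h0
      · refine ⟨z1 (t + t1), (tendsto_shift_right hz1c (by linarith) (by linarith)).congr' ?_⟩
        filter_upwards [Ioo_mem_nhdsGT_of_mem (⟨le_rfl, h0⟩ : t ∈ Ico t 0)] with x hx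
        exact (hw2 x (le_trans h hx.1.le) hx.2).symm
      rcases lt_or_ge t τ with hτ' | hτ'
      · refine ⟨z0, tendsto_const_nhds.congr' ?_⟩
        filter_upwards [Ioo_mem_nhdsGT_of_mem (⟨le_rfl, hτ'⟩ : t ∈ Ico t τ)] with x hx
        exact (hw3 x (le_trans h0 hx.1.le) hx.2).symm
      rcases lt_or_ge t (τ + t2) with hτ2 | hτ2
      · refine ⟨z2 (t + -τ), (tendsto_shift_right hz2c (by linarith) (by linarith)).congr' ?_⟩
        filter_upwards [Ioo_mem_nhdsGT_of_mem (⟨le_rfl, hτ2⟩ : t ∈ Ico t (τ + t2))] with x hx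
        rw [hw4 x (le_trans hτ' hx.1.le) hx.2.le, sub_eq_add_neg]
      · refine ⟨0, tendsto_const_nhds.congr' ?_⟩
        filter_upwards [eventually_mem_nhdsWithin] with x (hx : x ∈ Ioi t)
        exact (hw5 x (lt_of_le_of_lt hτ2 hx)).symm
    -- piecewise continuity
    have hpcwAll : ∀ a b : ℝ, PiecewiseContinuousOn w a b := by
      intro a b
      refine ⟨{-t1, 0, τ, τ + t2}, ?_, fun t _ => ⟨hlimL t, hlimR t⟩⟩
      intro t ht
      have h' := ht.2
      simp only [Finset.coe_insert, Set.mem_insert_iff, Finset.coe_singleton,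
        Set.mem_singleton_iff, not_or] at h'
      exact (hwcont t h'.1 h'.2.1 h'.2.2.1 h'.2.2.2).continuousWithinAt
    have hwi : ∀ a b : ℝ, IntervalIntegrable w volume a b := pcw_intervalIntegrable hpcwAll
    have hLwi : ∀ a b : ℝ, IntervalIntegrable (fun x => L (w x)) volume a b := by
      intro a b
      rw [intervalIntegrable_iff] at *
      exact L.integrable_comp (intervalIntegrable_iff.mp (hwi a b))
    -- the five piece identities
    have PA : ∀ a b : ℝ, a ≤ b → b ≤ -t1 → E (w b) - E (w a) = ∫ x in a..b, L (w x) := by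
      intro a b hab hb
      rw [hEA b hb, hEA a (hab.trans hb), sub_self]
      symm
      rw [show (0:X) = ∫ x in a..b, (0:X) from (intervalIntegral.integral_zero).symm]
      apply intervalIntegral.integral_congr_ae
      filter_upwards [ae_ne_real (-t1)] with x hx hxI
      rw [Set.uIoc_of_le hab] at hxI
      rw [hw1 x (lt_of_le_of_ne (hxI.2.trans hb) hx), map_zero]
    have PB : ∀ a b : ℝ, -t1 ≤ a → a ≤ b → b ≤ 0 →
        E (w b) - E (w a) = ∫ x in a..b, L (w x) := by
      intro a b ha hab hb
      rw [hEB b (ha.trans hab) hb, hEB a ha (hab.trans hb)]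
      have c1 : (∫ x in a..b, L (w x)) = ∫ x in a..b, L (z1 (x + t1)) := by
        apply intervalIntegral.integral_congr_ae
        filter_upwards [ae_ne_real 0] with x hx hxI
        rw [Set.uIoc_of_le hab] at hxI
        rw [hw2 x (ha.trans hxI.1.le) (lt_of_le_of_ne (hxI.2.trans hb) hx)]
      rw [c1, intervalIntegral.integral_comp_add_right (fun y => L (z1 y)) t1]
      exact hz1eq (a + t1) ⟨by linarith, by linarith⟩ (b + t1) ⟨by linarith, by linarith⟩
    have PC : ∀ a b : ℝ, 0 ≤ a → a ≤ b → b ≤ τ →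
        E (w b) - E (w a) = ∫ x in a..b, L (w x) := by
      intro a b ha hab hb
      rw [hEC b (ha.trans hab) hb, hEC a ha (hab.trans hb), sub_self]
      symm
      rw [show (0:X) = ∫ x in a..b, (0:X) from (intervalIntegral.integral_zero).symm]
      apply intervalIntegral.integral_congr_ae
      filter_upwards [ae_ne_real τ] with x hx hxI
      rw [Set.uIoc_of_le hab] at hxI
      rw [hw3 x (ha.trans hxI.1.le) (lt_of_le_of_ne (hxI.2.trans hb) hx), hz0L]
    have PD : ∀ a b : ℝ, τ ≤ a → a ≤ b → b ≤ τ + t2 →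
        E (w b) - E (w a) = ∫ x in a..b, L (w x) := by
      intro a b ha hab hb
      rw [hED b (ha.trans hab) hb, hED a ha (hab.trans hb)]
      have c1 : (∫ x in a..b, L (w x)) = ∫ x in a..b, L (z2 (x - τ)) := by
        apply intervalIntegral.integral_congr
        intro x hxI
        rw [Set.uIcc_of_le hab] at hxI
        show L (w x) = L (z2 (x - τ))
        rw [hw4 x (ha.trans hxI.1) (hxI.2.trans hb)]
      rw [c1, intervalIntegral.integral_comp_sub_right (fun y => L (z2 y)) τ]
      exact hz2eq (a - τ) ⟨by linarith, by linarith⟩ (b - τ) ⟨by linarith, by linarith⟩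
    have PE : ∀ a b : ℝ, τ + t2 ≤ a → a ≤ b → E (w b) - E (w a) = ∫ x in a..b, L (w x) := by
      intro a b ha hab
      rw [hEE b (ha.trans hab), hEE a ha, sub_self]
      symm
      rw [show (0:X) = ∫ x in a..b, (0:X) from (intervalIntegral.integral_zero).symm]
      apply intervalIntegral.integral_congr_ae
      filter_upwards [] with x hxI
      rw [Set.uIoc_of_le hab] at hxI
      rw [hw5 x (lt_of_le_of_lt ha hxI.1), map_zero]
    -- gluing
    have triv : ∀ c : ℝ, E (w c) - E (w c) = ∫ x in c..c, L (w x) := by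
      intro c; rw [intervalIntegral.integral_same, sub_self]
    have chain : ∀ a b c : ℝ, (E (w b) - E (w a) = ∫ x in a..b, L (w x)) →
        (E (w c) - E (w b) = ∫ x in b..c, L (w x)) →
        E (w c) - E (w a) = ∫ x in a..c, L (w x) := by
      intro a b c hab hbc
      rw [← intervalIntegral.integral_add_adjacent_intervals (hLwi a b) (hLwi b c), ← hab, ← hbc]
      abel
    have clamp : ∀ x y s t : ℝ, s ≤ t → x ≤ y →
        (∀ a b, x ≤ a → a ≤ b → b ≤ y → E (w b) - E (w a) = ∫ u in a..b, L (w u)) →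
        E (w (max s (min t y))) - E (w (max s (min t x)))
          = ∫ u in (max s (min t x))..(max s (min t y)), L (w u) := by
      intro x y s t hst hxy hP
      by_cases hty : t ≤ x
      · rw [min_eq_left hty, min_eq_left (hty.trans hxy)]
        exact triv _
      push_neg at hty
      by_cases hsy : y ≤ s
      · rw [max_eq_left (le_trans (min_le_right t x) (le_trans hxy hsy)),
          max_eq_left (le_trans (min_le_right t y) hsy)]
        exact triv _
      push_neg at hsy
      apply hP
      · rw [min_eq_right hty.le]; exact le_max_right _ _
      · exact max_le_max le_rfl (min_le_min le_rfl hxy)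
      · exact max_le hsy.le (min_le_right _ _)
    have Deq : ∀ s t : ℝ, E (w t) - E (w s) = ∫ x in s..t, L (w x) := by
      have Dle : ∀ s t : ℝ, s ≤ t → E (w t) - E (w s) = ∫ x in s..t, L (w x) := by
        intro s t hst
        have e1 := clamp (min s (-t1)) (-t1) s t hst (min_le_right _ _)
          (fun a b _ hab hb => PA a b hab hb)
        rw [max_eq_left (le_trans (min_le_right _ _) (min_le_left _ _))] at e1
        have e2 := clamp (-t1) 0 s t hst (by linarith) (fun a b ha hab hb => PB a b ha hab hb)
        have e3 := clamp 0 τ s t hst (by linarith) (fun a b ha hab hb => PC a b ha hab hb)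
        have e4 := clamp τ (τ + t2) s t hst (by linarith)
          (fun a b ha hab hb => PD a b ha hab hb)
        have e5 := clamp (τ + t2) (max t (τ + t2)) s t hst (le_max_right _ _)
          (fun a b ha hab _ => PE a b ha hab)
        rw [min_eq_left (le_max_left _ _), max_eq_right hst] at e5
        exact chain _ _ _ (chain _ _ _ (chain _ _ _ (chain _ _ _ e1 e2) e3) e4) e5
      intro s t
      rcases le_total s t with h | h
      · exact Dle s t h
      · have h' := Dle t s h
        rw [intervalIntegral.integral_symm t s, ← h']
        abel
    -- eventual constancy of the interval integrals
    set R : ℝ := t1 + τ + t2 + 1 with hR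
    have hsplit : ∀ g : ℝ → ℝ, (∀ u v : ℝ, IntervalIntegrable g volume u v) →
        (∀ x, x < -t1 → g x = 0) → (∀ x, τ + t2 < x → g x = 0) →
        ∀ T : ℝ, R ≤ T → (∫ x in (-T)..T, g x) = ∫ x in (-R)..R, g x := by
      intro g hgi hg1 hg2 T hT
      have hz1' : (∫ x in (-T)..(-R), g x) = 0 := by
        rw [show (0:ℝ) = ∫ x in (-T)..(-R), (0:ℝ) from (intervalIntegral.integral_zero).symm]
        apply intervalIntegral.integral_congr_ae
        filter_upwards [] with x hxI
        rw [Set.uIoc_of_le (by linarith : -T ≤ -R)] at hxI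
        exact hg1 x (by have := hxI.2; simp only [hR] at this ⊢; linarith)
      have hz2' : (∫ x in R..T, g x) = 0 := by
        rw [show (0:ℝ) = ∫ x in R..T, (0:ℝ) from (intervalIntegral.integral_zero).symm]
        apply intervalIntegral.integral_congr_ae
        filter_upwards [] with x hxI
        rw [Set.uIoc_of_le (by linarith : R ≤ T)] at hxI
        exact hg2 x (by have := hxI.1; simp only [hR] at this ⊢; linarith)
      have s1 := intervalIntegral.integral_add_adjacent_intervals (hgi (-T) (-R)) (hgi (-R) T)
      have s2 := intervalIntegral.integral_add_adjacent_intervals (hgi (-R) R) (hgi R T)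
      rw [← s1, hz1', zero_add, ← s2, hz2', add_zero]
    -- apply the main hypothesis
    obtain ⟨c, hclim, hc0⟩ := h2 w hwK hpcwAll Deq ⟨∫ x in (-R)..R, ‖w x‖, by
      apply Tendsto.congr' ?_ (tendsto_const_nhds)
      filter_upwards [eventually_ge_atTop R] with T hT
      exact (hsplit (fun x => ‖w x‖) (fun u v => (hwi u v).norm)
        (fun x hx => by show ‖w x‖ = 0; rw [hw1 x hx, norm_zero])
        (fun x hx => by show ‖w x‖ = 0; rw [hw5 x hx, norm_zero]) T hT).symm⟩
    have hmi : ∀ u v : ℝ, IntervalIntegrable (fun x => mstar (w x)) volume u v := by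
      intro u v
      rw [intervalIntegrable_iff] at *
      exact mstar.integrable_comp (intervalIntegrable_iff.mp (hwi u v))
    have hceq : c = ∫ x in (-R)..R, mstar (w x) := by
      apply tendsto_nhds_unique hclim
      apply Tendsto.congr' ?_ (tendsto_const_nhds)
      filter_upwards [eventually_ge_atTop R] with T hT
      exact (hsplit (fun x => mstar (w x)) hmi
        (fun x hx => by show mstar (w x) = 0; rw [hw1 x hx, map_zero])
        (fun x hx => by show mstar (w x) = 0; rw [hw5 x hx, map_zero]) T hT).symm
    -- compute the integral over [-R, R]
    have hval : (∫ x in (-R)..R, mstar (w x)) = A + τ * mstar z0 + B := by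
      have o1 : (-R : ℝ) ≤ -t1 := by simp only [hR]; linarith
      have o2 : (-t1 : ℝ) ≤ 0 := by linarith
      have o3 : (0:ℝ) ≤ τ := hτ.le
      have o4 : τ ≤ τ + t2 := by linarith
      have o5 : τ + t2 ≤ R := by simp only [hR]; linarith
      have i1 : (∫ x in (-R)..(-t1), mstar (w x)) = 0 := by
        rw [show (0:ℝ) = ∫ x in (-R)..(-t1), (0:ℝ) from (intervalIntegral.integral_zero).symm]
        apply intervalIntegral.integral_congr_ae
        filter_upwards [ae_ne_real (-t1)] with x hx hxI
        rw [Set.uIoc_of_le o1] at hxI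
        rw [hw1 x (lt_of_le_of_ne hxI.2 hx), map_zero]
      have i2 : (∫ x in (-t1)..(0:ℝ), mstar (w x)) = A := by
        have c1 : (∫ x in (-t1)..(0:ℝ), mstar (w x))
            = ∫ x in (-t1)..(0:ℝ), mstar (z1 (x + t1)) := by
          apply intervalIntegral.integral_congr_ae
          filter_upwards [ae_ne_real 0] with x hx hxI
          rw [Set.uIoc_of_le o2] at hxI
          rw [hw2 x hxI.1.le (lt_of_le_of_ne hxI.2 hx)]
        rw [c1, intervalIntegral.integral_comp_add_right (fun y => mstar (z1 y)) t1,
          neg_add_cancel, zero_add, hA]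
      have i3 : (∫ x in (0:ℝ)..τ, mstar (w x)) = τ * mstar z0 := by
        have c1 : (∫ x in (0:ℝ)..τ, mstar (w x)) = ∫ x in (0:ℝ)..τ, mstar z0 := by
          apply intervalIntegral.integral_congr_ae
          filter_upwards [ae_ne_real τ] with x hx hxI
          rw [Set.uIoc_of_le o3] at hxI
          rw [hw3 x hxI.1.le (lt_of_le_of_ne hxI.2 hx)]
        rw [c1, intervalIntegral.integral_const, smul_eq_mul, sub_zero]
      have i4 : (∫ x in τ..(τ + t2), mstar (w x)) = B := by
        have c1 : (∫ x in τ..(τ + t2), mstar (w x))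
            = ∫ x in τ..(τ + t2), mstar (z2 (x - τ)) := by
          apply intervalIntegral.integral_congr
          intro x hxI
          rw [Set.uIcc_of_le o4] at hxI
          show mstar (w x) = mstar (z2 (x - τ))
          rw [hw4 x hxI.1 hxI.2]
        rw [c1, intervalIntegral.integral_comp_sub_right (fun y => mstar (z2 y)) τ,
          sub_self, add_sub_cancel_left, hB]
      have i5 : (∫ x in (τ + t2)..R, mstar (w x)) = 0 := by
        rw [show (0:ℝ) = ∫ x in (τ + t2)..R, (0:ℝ) from (intervalIntegral.integral_zero).symm]
        apply intervalIntegral.integral_congr_ae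
        filter_upwards [] with x hxI
        rw [Set.uIoc_of_le o5] at hxI
        rw [hw5 x hxI.1, map_zero]
      have s1 := intervalIntegral.integral_add_adjacent_intervals (hmi (-R) (-t1)) (hmi (-t1) R)
      have s2 := intervalIntegral.integral_add_adjacent_intervals (hmi (-t1) 0) (hmi 0 R)
      have s3 := intervalIntegral.integral_add_adjacent_intervals (hmi 0 τ) (hmi τ R)
      have s4 := intervalIntegral.integral_add_adjacent_intervals (hmi τ (τ+t2)) (hmi (τ+t2) R)
      rw [← s1, i1, zero_add, ← s2, i2, ← s3, i3, ← s4, i4, i5, add_zero]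
      ring
    rw [hceq, hval] at hc0
    exact hc0
  -- conclude
  by_contra hneg
  push_neg at hneg
  set τ : ℝ := max 1 ((A + B + 1) / (-mstar z0)) with hτdef
  have hτpos : 0 < τ := lt_of_lt_of_le one_pos (le_max_left _ _)
  have hm : 0 < -mstar z0 := by linarith
  have hge : (A + B + 1) / (-mstar z0) ≤ τ := le_max_right _ _
  have : A + B + 1 ≤ τ * (-mstar z0) := (div_le_iff₀ hm).mp hge
  have hk := key τ hτpos
  nlinarith
end

/-- cone analog of the KYP lemma. Assume `(E, L)` is controllable
on the convex cone `K` and `E(K)` has nonempty interior. Then the following are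
equivalent: (i) the conic inequality `p*(L z) ≤ m*(z)` on `K` is solvable; (ii) every
piecewise continuous, absolutely integrable, `K`-valued solution of `d/dt E(z) = L(z)`
on `ℝ` has nonnegative principal-value integral `∫ m*(z(t)) dt`; (iii) `m*` is
nonnegative on kernel points of `L` in `K`. -/
theorem conic_ineq_iff_integral_constraint_iff_kernel_nonneg
    {Z X : Type*} [NormedAddCommGroup Z] [NormedSpace ℝ Z] [FiniteDimensional ℝ Z]
    [NormedAddCommGroup X] [NormedSpace ℝ X] [FiniteDimensional ℝ X]
    (K : Set Z) (hKcone : ∀ z ∈ K, ∀ α : ℝ, 0 ≤ α → α • z ∈ K) (hKconv : Convex ℝ K)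
    (E L : Z →L[ℝ] X) (hctrl : ControllableOn E L K)
    (hint : (interior (E '' K)).Nonempty)
    (mstar : Z →L[ℝ] ℝ) :
    ((∃ pstar : X →L[ℝ] ℝ, ∀ z ∈ K, pstar (L z) - mstar z ≤ 0) ↔
      (∀ z : ℝ → Z, (∀ t, z t ∈ K) →
        (∀ a b : ℝ, PiecewiseContinuousOn z a b) →
        (∀ s t : ℝ, E (z t) - E (z s) = ∫ τ in s..t, L (z τ)) →
        (∃ c : ℝ, Tendsto (fun T : ℝ => ∫ t in (-T)..T, ‖z t‖) atTop (nhds c)) →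
        ∃ c : ℝ, Tendsto (fun T : ℝ => ∫ t in (-T)..T, mstar (z t)) atTop (nhds c) ∧
          0 ≤ c)) ∧
    ((∀ z : ℝ → Z, (∀ t, z t ∈ K) →
        (∀ a b : ℝ, PiecewiseContinuousOn z a b) →
        (∀ s t : ℝ, E (z t) - E (z s) = ∫ τ in s..t, L (z τ)) →
        (∃ c : ℝ, Tendsto (fun T : ℝ => ∫ t in (-T)..T, ‖z t‖) atTop (nhds c)) →
        ∃ c : ℝ, Tendsto (fun T : ℝ => ∫ t in (-T)..T, mstar (z t)) atTop (nhds c) ∧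
          0 ≤ c) ↔
      (∀ z0 ∈ K, L z0 = 0 → 0 ≤ mstar z0)) := by
  constructor
  · constructor
    · intro h1 z hz hpcw heq hnorm
      exact conic_imp_integral h1 z hz hpcw heq hnorm
    · intro hii
      exact kernel_imp_conic hKcone hKconv hctrl hint (integral_imp_kernel hKcone hctrl hii)
  · constructor
    · intro hii
      exact integral_imp_kernel hKcone hctrl hii
    · intro h3 z hz hpcw heq hnorm
      exact conic_imp_integral (kernel_imp_conic hKcone hKconv hctrl hint h3) z hz hpcw heq hnorm
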